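/- Let (W_1, W_2) on K be a minimal regular unitary dilation of (T_1, T_2) on H, and S_1,…,S_d isometries on H such that (T_1, S_1,…,S_d) and (T_2, S_1,…,S_d) are doubly commuting. Then there exists a commuting tuple of isometries (U_1,…,U_d) on K such that (W_1, W_2, U_1,…,U_d) is an isometric dilation of (T_1, T_2, S_1,…,S_d); moreover each U_i is simultaneously an extension and a co-extension of S_i, i.e. U_i|_H = S_i and U_i* h = S_i* h for all h ∈ H, and each U_i commutes with W_1 and W_2. -/

import Mathlib

open ContinuousLinearMap

/-- For commuting unitaries `W₁, W₂`, the operator `W^k = W₁^{k₁} W₂^{k₂}` for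
`k ∈ ℤ²`, written via positive and negative parts. -/
noncomputable def Wpow {K : Type*} [NormedAddCommGroup K] [InnerProductSpace ℂ K]
    [CompleteSpace K] (W₁ W₂ : K →L[ℂ] K) (a b : ℤ) : K →L[ℂ] K :=
  W₁ ^ a.toNat * (adjoint W₁) ^ (-a).toNat *
    (W₂ ^ b.toNat * (adjoint W₂) ^ (-b).toNat)

local notation "⟪" x ", " y "⟫" => inner (𝕜 := ℂ) x y

/-- A map defined on an indexed family of "columns" `G p : H →L K` that preserves all
inner products extends to an isometry of `K`, provided the columns span a dense subspace. -/
lemma exists_isometric_lift {H K : Type*}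
    [NormedAddCommGroup H] [InnerProductSpace ℂ H]
    [NormedAddCommGroup K] [InnerProductSpace ℂ K] [CompleteSpace K]
    {α : Type*} (G G' : α → H →L[ℂ] K)
    (hGram : ∀ p q (h g : H), ⟪G' p h, G' q g⟫ = ⟪G p h, G q g⟫)
    (hdense : Dense ((Submodule.span ℂ {x : K | ∃ p h, x = G p h} : Submodule ℂ K) : Set K)) :
    ∃ U : K →L[ℂ] K, (∀ x, ‖U x‖ = ‖x‖) ∧ ∀ p h, U (G p h) = G' p h := by
  classical
  set L : (α →₀ H) →ₗ[ℂ] K := Finsupp.lsum ℂ (fun p => (G p : H →ₗ[ℂ] K)) with hLdef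
  set L' : (α →₀ H) →ₗ[ℂ] K := Finsupp.lsum ℂ (fun p => (G' p : H →ₗ[ℂ] K)) with hL'def
  have hLapp : ∀ x : α →₀ H, L x = ∑ p ∈ x.support, G p (x p) := fun x => rfl
  have hL'app : ∀ x : α →₀ H, L' x = ∑ p ∈ x.support, G' p (x p) := fun x => rfl
  have hgram : ∀ x y, ⟪L' x, L' y⟫ = ⟪L x, L y⟫ := by
    intro x y
    rw [hLapp, hL'app, hLapp, hL'app, sum_inner, sum_inner]
    refine Finset.sum_congr rfl fun p _ => ?_
    rw [inner_sum, inner_sum]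
    exact Finset.sum_congr rfl fun q _ => hGram p q _ _
  have hnorm : ∀ x, ‖L' x‖ = ‖L x‖ := by
    intro x
    rw [@norm_eq_sqrt_re_inner ℂ, @norm_eq_sqrt_re_inner ℂ, hgram]
  have hker : LinearMap.ker L ≤ LinearMap.ker L' := by
    intro x hx
    rw [LinearMap.mem_ker] at hx ⊢
    rw [← norm_eq_zero, hnorm, hx, norm_zero]
  let ψ : ((α →₀ H) ⧸ LinearMap.ker L) →ₗ[ℂ] K := Submodule.liftQ _ L' hker
  let φ : LinearMap.range L →ₗ[ℂ] K := ψ ∘ₗ (L.quotKerEquivRange.symm : _ →ₗ[ℂ] _)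
  have hφ : ∀ (x : α →₀ H) (hx : L x ∈ LinearMap.range L), φ ⟨L x, hx⟩ = L' x := by
    intro x hx
    have h1 : L.quotKerEquivRange.symm ⟨L x, hx⟩ = (LinearMap.ker L).mkQ x :=
      L.quotKerEquivRange_symm_apply_image x hx
    simp only [φ, LinearMap.coe_comp, LinearEquiv.coe_coe, Function.comp_apply, h1]
    rfl
  have hφnorm : ∀ v : LinearMap.range L, ‖φ v‖ = ‖v‖ := by
    rintro ⟨v, x, rfl⟩
    rw [hφ x ⟨x, rfl⟩, hnorm]
    rfl
  let φc : LinearMap.range L →L[ℂ] K :=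
    φ.mkContinuous 1 (fun v => by rw [hφnorm, one_mul])
  have hsub : ({x : K | ∃ p h, x = G p h} : Set K) ⊆ (LinearMap.range L : Set K) := by
    rintro x ⟨p, h, rfl⟩
    refine ⟨Finsupp.single p h, ?_⟩
    rw [hLdef]
    simp [Finsupp.lsum_apply, Finsupp.sum_single_index]
  have hdr : Dense ((LinearMap.range L : Submodule ℂ K) : Set K) :=
    hdense.mono (by exact_mod_cast Submodule.span_le.mpr hsub)
  have hdr' : DenseRange ((LinearMap.range L).subtypeL) := by
    exact hdr.mono (by rintro x ⟨y, hy⟩; exact ⟨⟨x, y, hy⟩, rfl⟩)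
  have hui : IsUniformInducing ((LinearMap.range L).subtypeL : LinearMap.range L →L[ℂ] K) := by
    exact (isometry_subtype_coe (s := (LinearMap.range L : Set K))).isUniformInducing
  have hUL : ∀ x : α →₀ H,
      (φc.extend (LinearMap.range L).subtypeL) (L x) = L' x := by
    intro x
    have h1 : L x = (LinearMap.range L).subtypeL ⟨L x, ⟨x, rfl⟩⟩ := rfl
    rw [h1, ContinuousLinearMap.extend_eq (h_dense := hdr') (h_e := hui)]
    exact hφ x _
  refine ⟨φc.extend (LinearMap.range L).subtypeL, ?_, ?_⟩
  · have heq : Set.EqOn (fun y => ‖(φc.extend (LinearMap.range L).subtypeL) y‖)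
        (fun y => ‖y‖) (LinearMap.range L : Set K) := by
      rintro v ⟨x, rfl⟩
      simp only
      rw [hUL, hnorm]
    have := Continuous.ext_on hdr
      ((φc.extend (LinearMap.range L).subtypeL).continuous.norm)
      continuous_norm heq
    exact fun x => congrFun this x
  · intro p h
    have h2 : L (Finsupp.single p h) = G p h := by
      rw [hLdef]; simp [Finsupp.lsum_apply, Finsupp.sum_single_index]
    have h3 : L' (Finsupp.single p h) = G' p h := by
      rw [hL'def]; simp [Finsupp.lsum_apply, Finsupp.sum_single_index]
    rw [← h2, hUL, h3]

lemma ext_on_dense {K E : Type*} [NormedAddCommGroup K] [InnerProductSpace ℂ K]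
    [NormedAddCommGroup E] [NormedSpace ℂ E]
    {s : Set K} (hs : Dense ((Submodule.span ℂ s : Submodule ℂ K) : Set K))
    {A B : K →L[ℂ] E} (hAB : ∀ x ∈ s, A x = B x) : A = B := by
  have h1 : Set.EqOn ⇑A ⇑B ((Submodule.span ℂ s : Submodule ℂ K) : Set K) :=
    LinearMap.eqOn_span' (fun x hx => hAB x hx)
  exact ContinuousLinearMap.coeFn_injective
    (Continuous.ext_on hs A.continuous B.continuous h1)

set_option maxHeartbeats 2000000 in
/-- Let `(W₁, W₂)` on `K` be a minimal regular unitary dilation of `(T₁, T₂)` on `H`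
(embedded via the isometry `ι`), and `S_1,…,S_d` isometries on `H` such that
`(T₁, S_1,…,S_d)` and `(T₂, S_1,…,S_d)` are doubly commuting. Then there is a commuting
tuple of isometries `(U_1,…,U_d)` on `K`, each commuting with `W₁` and `W₂`, such that
`(W₁, W₂, U_1,…,U_d)` is an isometric dilation of `(T₁, T₂, S_1,…,S_d)`, and each `U_i`
is both an extension and a co-extension of `S_i`. -/
theorem doubly_commuting_lifting {H K : Type*}
    [NormedAddCommGroup H] [InnerProductSpace ℂ H] [CompleteSpace H]
    [NormedAddCommGroup K] [InnerProductSpace ℂ K] [CompleteSpace K]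
    (ι : H →L[ℂ] K) (hι : adjoint ι ∘L ι = 1)
    (T₁ T₂ : H →L[ℂ] H) (hT₁ : ‖T₁‖ ≤ 1) (hT₂ : ‖T₂‖ ≤ 1) (hT : Commute T₁ T₂)
    (W₁ W₂ : K →L[ℂ] K)
    (hW₁ : adjoint W₁ ∘L W₁ = 1 ∧ W₁ ∘L adjoint W₁ = 1)
    (hW₂ : adjoint W₂ ∘L W₂ = 1 ∧ W₂ ∘L adjoint W₂ = 1)
    (hW : Commute W₁ W₂)
    (hreg : ∀ a b : ℤ,
      adjoint ι ∘L ((adjoint W₁) ^ (-a).toNat * (adjoint W₂) ^ (-b).toNat *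
          (W₁ ^ a.toNat * W₂ ^ b.toNat)) ∘L ι
        = (adjoint T₁) ^ (-a).toNat * (adjoint T₂) ^ (-b).toNat *
            (T₁ ^ a.toNat * T₂ ^ b.toNat))
    (hmin : (Submodule.span ℂ
        {x : K | ∃ (a b : ℤ) (h : H), x = Wpow W₁ W₂ a b (ι h)}).topologicalClosure = ⊤)
    {d : ℕ} (S : Fin d → (H →L[ℂ] H))
    (hS : ∀ i, adjoint (S i) ∘L S i = 1)
    (hSS : ∀ i j, i ≠ j →
      S i * S j = S j * S i ∧ S i * adjoint (S j) = adjoint (S j) * S i)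
    (hST₁ : ∀ i, T₁ * S i = S i * T₁ ∧ T₁ * adjoint (S i) = adjoint (S i) * T₁)
    (hST₂ : ∀ i, T₂ * S i = S i * T₂ ∧ T₂ * adjoint (S i) = adjoint (S i) * T₂) :
    ∃ U : Fin d → (K →L[ℂ] K),
      (∀ i, adjoint (U i) ∘L U i = 1) ∧
      (∀ i j, Commute (U i) (U j)) ∧
      (∀ i, Commute (U i) W₁ ∧ Commute (U i) W₂) ∧
      (∀ (k₁ k₂ : ℕ) (m : Fin d → ℕ),
        adjoint ι ∘L (W₁ ^ k₁ * W₂ ^ k₂ * (List.ofFn fun i => U i ^ m i).prod) ∘L ι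
          = T₁ ^ k₁ * T₂ ^ k₂ * (List.ofFn fun i => S i ^ m i).prod) ∧
      (∀ (i : Fin d) (h : H),
        U i (ι h) = ι (S i h) ∧ adjoint (U i) (ι h) = ι (adjoint (S i) h)) := by
  classical
  -- the unitary group elements
  have hmem₁ : W₁ ∈ unitary (K →L[ℂ] K) := by
    constructor
    · rw [star_eq_adjoint]; exact hW₁.1
    · rw [star_eq_adjoint]; exact hW₁.2
  have hmem₂ : W₂ ∈ unitary (K →L[ℂ] K) := by
    constructor
    · rw [star_eq_adjoint]; exact hW₂.1
    · rw [star_eq_adjoint]; exact hW₂.2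
  set u₁ : unitary (K →L[ℂ] K) := ⟨W₁, hmem₁⟩ with hu₁
  set u₂ : unitary (K →L[ℂ] K) := ⟨W₂, hmem₂⟩ with hu₂
  set w₁ : ℤ → (K →L[ℂ] K) := fun z => ((u₁ ^ z : unitary (K →L[ℂ] K)) : K →L[ℂ] K) with hw₁
  set w₂ : ℤ → (K →L[ℂ] K) := fun z => ((u₂ ^ z : unitary (K →L[ℂ] K)) : K →L[ℂ] K) with hw₂
  have hw₁add : ∀ a b : ℤ, w₁ a * w₁ b = w₁ (a + b) := by
    intro a b; simp only [hw₁, zpow_add]; rfl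
  have hw₂add : ∀ a b : ℤ, w₂ a * w₂ b = w₂ (a + b) := by
    intro a b; simp only [hw₂, zpow_add]; rfl
  have hw₁pow : ∀ n : ℕ, w₁ (n : ℤ) = W₁ ^ n := by
    intro n; rw [hw₁]; simp [zpow_natCast]; rfl
  have hw₂pow : ∀ n : ℕ, w₂ (n : ℤ) = W₂ ^ n := by
    intro n; rw [hw₂]; simp [zpow_natCast]; rfl
  have hw₁neg : ∀ n : ℕ, w₁ (-(n : ℤ)) = (adjoint W₁) ^ n := by
    intro n
    simp only [hw₁, zpow_neg, zpow_natCast, ← Unitary.star_eq_inv, Unitary.coe_star,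
      SubmonoidClass.coe_pow, star_pow, star_eq_adjoint]
    rfl
  have hw₂neg : ∀ n : ℕ, w₂ (-(n : ℤ)) = (adjoint W₂) ^ n := by
    intro n
    simp only [hw₂, zpow_neg, zpow_natCast, ← Unitary.star_eq_inv, Unitary.coe_star,
      SubmonoidClass.coe_pow, star_pow, star_eq_adjoint]
    rfl
  have hw₁star : ∀ z : ℤ, adjoint (w₁ z) = w₁ (-z) := by
    intro z
    rw [← star_eq_adjoint, hw₁]
    simp only [zpow_neg, ← Unitary.star_eq_inv, Unitary.coe_star]
  have hw₂star : ∀ z : ℤ, adjoint (w₂ z) = w₂ (-z) := by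
    intro z
    rw [← star_eq_adjoint, hw₂]
    simp only [zpow_neg, ← Unitary.star_eq_inv, Unitary.coe_star]
  have hu₁₂ : Commute u₁ u₂ := by
    apply Subtype.ext
    exact hW
  have hcomm : ∀ a b : ℤ, Commute (w₁ a) (w₂ b) := by
    intro a b
    have h := hu₁₂.zpow_zpow a b
    have h2 := congrArg (fun v : unitary (K →L[ℂ] K) => (v : K →L[ℂ] K)) h
    exact h2
  have hWpow : ∀ a b : ℤ, Wpow W₁ W₂ a b = w₁ a * w₂ b := by
    intro a b
    unfold Wpow
    rw [← hw₁pow, ← hw₁neg, ← hw₂pow, ← hw₂neg, hw₁add, hw₂add]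
    congr 1 <;> [skip; skip] <;> congr 1 <;> omega
  -- the moment operators
  set M : ℤ → ℤ → (H →L[ℂ] H) := fun c₁ c₂ =>
    adjoint T₁ ^ (-c₁).toNat * adjoint T₂ ^ (-c₂).toNat * (T₁ ^ c₁.toNat * T₂ ^ c₂.toNat)
    with hM
  have hregw : ∀ c₁ c₂ : ℤ, adjoint ι ∘L (w₁ c₁ * w₂ c₂) ∘L ι = M c₁ c₂ := by
    intro c₁ c₂
    simp only [hM]
    rw [← hreg c₁ c₂]
    congr 2
    rw [← hw₁neg, ← hw₂neg, ← hw₁pow, ← hw₂pow,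
      (hcomm _ _).symm.mul_mul_mul_comm, hw₁add, hw₂add]
    congr 2 <;> omega
  -- density
  have hden : Dense ((Submodule.span ℂ
      {x : K | ∃ (a b : ℤ) (h : H), x = Wpow W₁ W₂ a b (ι h)} : Submodule ℂ K) : Set K) :=
    Submodule.dense_iff_topologicalClosure_eq_top.mpr hmin
  -- commutation facts for the S i
  have hScomm : ∀ i, Commute (S i) T₁ ∧ Commute (S i) T₂ ∧
      Commute (S i) (adjoint T₁) ∧ Commute (S i) (adjoint T₂) := by
    intro i
    refine ⟨(hST₁ i).1.symm, (hST₂ i).1.symm, ?_, ?_⟩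
    · have h : S i * adjoint T₁ = adjoint T₁ * S i := by
        have h0 := congrArg star (hST₁ i).2
        simpa [star_mul, star_eq_adjoint, adjoint_adjoint] using h0
      exact h
    · have h : S i * adjoint T₂ = adjoint T₂ * S i := by
        have h0 := congrArg star (hST₂ i).2
        simpa [star_mul, star_eq_adjoint, adjoint_adjoint] using h0
      exact h
  have hSM : ∀ (i : Fin d) (c₁ c₂ : ℤ), Commute (S i) (M c₁ c₂) := by
    intro i c₁ c₂
    obtain ⟨h1, h2, h3, h4⟩ := hScomm i
    simp only [hM]
    exact ((h3.pow_right _).mul_right (h4.pow_right _)).mul_right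
      ((h1.pow_right _).mul_right (h2.pow_right _))
  have hS'comm : ∀ i, Commute (adjoint (S i)) T₁ ∧ Commute (adjoint (S i)) T₂ ∧
      Commute (adjoint (S i)) (adjoint T₁) ∧ Commute (adjoint (S i)) (adjoint T₂) := by
    intro i
    refine ⟨(hST₁ i).2.symm, (hST₂ i).2.symm, ?_, ?_⟩
    · have h : adjoint (S i) * adjoint T₁ = adjoint T₁ * adjoint (S i) := by
        have h0 := congrArg star (hST₁ i).1
        simpa [star_mul, star_eq_adjoint] using h0
      exact h
    · have h : adjoint (S i) * adjoint T₂ = adjoint T₂ * adjoint (S i) := by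
        have h0 := congrArg star (hST₂ i).1
        simpa [star_mul, star_eq_adjoint] using h0
      exact h
  have hS'M : ∀ (i : Fin d) (c₁ c₂ : ℤ), Commute (adjoint (S i)) (M c₁ c₂) := by
    intro i c₁ c₂
    obtain ⟨h1, h2, h3, h4⟩ := hS'comm i
    simp only [hM]
    exact ((h3.pow_right _).mul_right (h4.pow_right _)).mul_right
      ((h1.pow_right _).mul_right (h2.pow_right _))
  -- composition law for adjoints of the w's
  have hcompw : ∀ a b a' b' : ℤ,
      adjoint (w₁ a * w₂ b) * (w₁ a' * w₂ b') = w₁ (a' - a) * w₂ (b' - b) := by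
    intro a b a' b'
    rw [← star_eq_adjoint, star_mul, star_eq_adjoint, star_eq_adjoint, hw₁star, hw₂star,
      ← (hcomm (-a) (-b)).eq, (hcomm a' (-b)).symm.mul_mul_mul_comm, hw₁add, hw₂add]
    congr 2 <;> omega
  -- the fundamental inner product formula
  have hinner : ∀ (a b a' b' : ℤ) (u v : H),
      ⟪(w₁ a * w₂ b) (ι u), (w₁ a' * w₂ b') (ι v)⟫ = ⟪u, M (a' - a) (b' - b) v⟫ := by
    intro a b a' b' u v
    rw [← hregw]
    simp only [comp_apply]
    rw [adjoint_inner_right ι, ← adjoint_inner_right (w₁ a * w₂ b), ← mul_apply_eq_comp, hcompw]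
  have hone : w₁ 0 * w₂ 0 = 1 := by
    simp only [hw₁, hw₂, zpow_zero, OneMemClass.coe_one, one_mul]
  have hinner0 : ∀ (a b : ℤ) (u v : H),
      ⟪ι u, (w₁ a * w₂ b) (ι v)⟫ = ⟪u, M a b v⟫ := by
    intro a b u v
    have h0 := hinner 0 0 a b u v
    rw [hone] at h0
    simpa using h0
  -- construct the lifts
  have hlift : ∀ i : Fin d, ∃ U : K →L[ℂ] K, (∀ x, ‖U x‖ = ‖x‖) ∧
      ∀ (p : ℤ × ℤ) (h : H), U (((w₁ p.1 * w₂ p.2) ∘L ι) h)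
        = ((w₁ p.1 * w₂ p.2) ∘L (ι ∘L S i)) h := by
    intro i
    refine exists_isometric_lift (fun p : ℤ × ℤ => (w₁ p.1 * w₂ p.2) ∘L ι)
      (fun p : ℤ × ℤ => (w₁ p.1 * w₂ p.2) ∘L (ι ∘L S i)) ?_ ?_
    · intro p q x y
      simp only [comp_apply]
      rw [hinner, hinner, ← mul_apply_eq_comp, ← (hSM i _ _).eq, mul_apply_eq_comp,
        ← adjoint_inner_right (S i), ← comp_apply (adjoint (S i)) (S i), hS i, one_apply_eq_self]
    · have hseteq : {x : K | ∃ (p : ℤ × ℤ) (h : H), x = ((w₁ p.1 * w₂ p.2) ∘L ι) h}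
          = {x : K | ∃ (a b : ℤ) (h : H), x = Wpow W₁ W₂ a b (ι h)} := by
        ext x
        constructor
        · rintro ⟨⟨a, b⟩, h, rfl⟩
          exact ⟨a, b, h, by rw [hWpow]; rfl⟩
        · rintro ⟨a, b, h, rfl⟩
          exact ⟨(a, b), h, by rw [hWpow]; rfl⟩
      rw [hseteq]
      exact hden
  choose U hUnorm hUgen using hlift
  have hU : ∀ (i : Fin d) (a b : ℤ) (h : H),
      U i ((w₁ a * w₂ b) (ι h)) = (w₁ a * w₂ b) (ι (S i h)) := by
    intro i a b h
    have h0 := hUgen i (a, b) h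
    simpa only [comp_apply] using h0
  -- extension property
  have hUext : ∀ (i : Fin d) (h : H), U i (ι h) = ι (S i h) := by
    intro i h
    have h0 := hU i 0 0 h
    rwa [hone, one_apply_eq_self, one_apply_eq_self] at h0
  -- U i is an isometry
  have hUiso : ∀ i, adjoint (U i) ∘L U i = 1 := by
    intro i
    ext x
    refine ext_inner_right ℂ fun y => ?_
    simp only [comp_apply, one_apply_eq_self]
    rw [adjoint_inner_left]
    exact LinearIsometry.inner_map_map ⟨(U i : K →ₗ[ℂ] K), hUnorm i⟩ x y
  -- commutation with W₁ and W₂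
  have e₁ : W₁ = w₁ 1 := by
    rw [show (1 : ℤ) = ((1 : ℕ) : ℤ) from rfl, hw₁pow, pow_one]
  have e₂ : W₂ = w₂ 1 := by
    rw [show (1 : ℤ) = ((1 : ℕ) : ℤ) from rfl, hw₂pow, pow_one]
  have hW₁w : ∀ a b : ℤ, W₁ * (w₁ a * w₂ b) = w₁ (1 + a) * w₂ b := by
    intro a b
    rw [e₁, ← mul_assoc, hw₁add]
  have hW₂w : ∀ a b : ℤ, W₂ * (w₁ a * w₂ b) = w₁ a * w₂ (1 + b) := by
    intro a b
    rw [e₂, ← mul_assoc, ← (hcomm a 1).eq, mul_assoc, hw₂add]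
  have hUW : ∀ i, Commute (U i) W₁ ∧ Commute (U i) W₂ := by
    intro i
    constructor
    · apply ext_on_dense hden
      rintro x ⟨a, b, h, rfl⟩
      rw [hWpow]
      rw [mul_apply_eq_comp (U i) W₁, mul_apply_eq_comp W₁ (U i), ← mul_apply_eq_comp W₁ (w₁ a * w₂ b), hW₁w,
        hU, hU, ← mul_apply_eq_comp W₁ (w₁ a * w₂ b), hW₁w]
    · apply ext_on_dense hden
      rintro x ⟨a, b, h, rfl⟩
      rw [hWpow]
      rw [mul_apply_eq_comp (U i) W₂, mul_apply_eq_comp W₂ (U i), ← mul_apply_eq_comp W₂ (w₁ a * w₂ b), hW₂w,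
        hU, hU, ← mul_apply_eq_comp W₂ (w₁ a * w₂ b), hW₂w]
  -- commutation among the U i
  have hUU : ∀ i j, Commute (U i) (U j) := by
    intro i j
    rcases eq_or_ne i j with rfl | hne
    · exact Commute.refl _
    · apply ext_on_dense hden
      rintro x ⟨a, b, h, rfl⟩
      rw [hWpow]
      rw [mul_apply_eq_comp (U i) (U j), mul_apply_eq_comp (U j) (U i), hU, hU, hU, hU]
      have hsij : S i (S j h) = S j (S i h) := by
        rw [← mul_apply_eq_comp (S i) (S j), (hSS i j hne).1, mul_apply_eq_comp]
      rw [hsij]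
  -- co-extension property
  have hUadj : ∀ (i : Fin d) (h : H), adjoint (U i) (ι h) = ι (adjoint (S i) h) := by
    intro i h
    refine ext_inner_right ℂ fun y => ?_
    have hfun : (innerSL ℂ (adjoint (U i) (ι h)) : K →L[ℂ] ℂ)
        = innerSL ℂ (ι (adjoint (S i) h)) := by
      apply ext_on_dense hden
      rintro y ⟨a, b, g, rfl⟩
      rw [hWpow]
      simp only [innerSL_apply_apply]
      rw [adjoint_inner_left, hU, hinner0, ← mul_apply_eq_comp, ← (hSM i a b).eq, mul_apply_eq_comp,
        hinner0, ← adjoint_inner_left (S i)]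
    have := congrArg (fun f : K →L[ℂ] ℂ => f y) hfun
    simpa only [innerSL_apply_apply] using this
  -- the dilation identity
  have hUpow : ∀ (i : Fin d) (n : ℕ) (h : H), (U i ^ n) (ι h) = ι ((S i ^ n) h) := by
    intro i n
    induction n with
    | zero => intro h; simp only [pow_zero, one_apply_eq_self]
    | succ n ih =>
      intro h
      rw [pow_succ, mul_apply_eq_comp, hUext i h, ih (S i h), ← mul_apply_eq_comp, ← pow_succ]
  have hprod : ∀ (m : Fin d → ℕ) (l : List (Fin d)) (h : H),
      ((l.map fun i => U i ^ m i).prod) (ι h) = ι (((l.map fun i => S i ^ m i).prod) h) := by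
    intro m l
    induction l with
    | nil => intro h; simp only [List.map_nil, List.prod_nil, one_apply_eq_self]
    | cons a l ih =>
      intro h
      simp only [List.map_cons, List.prod_cons, mul_apply_eq_comp]
      rw [ih h, hUpow]
  have hdil : ∀ (k₁ k₂ : ℕ) (m : Fin d → ℕ),
      adjoint ι ∘L (W₁ ^ k₁ * W₂ ^ k₂ * (List.ofFn fun i => U i ^ m i).prod) ∘L ι
        = T₁ ^ k₁ * T₂ ^ k₂ * (List.ofFn fun i => S i ^ m i).prod := by
    intro k₁ k₂ m
    have hri := hreg (k₁ : ℤ) (k₂ : ℤ)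
    have t1 : ((k₁ : ℤ)).toNat = k₁ := Int.toNat_natCast k₁
    have t2 : ((k₂ : ℤ)).toNat = k₂ := Int.toNat_natCast k₂
    have t3 : (-(k₁ : ℤ)).toNat = 0 := by omega
    have t4 : (-(k₂ : ℤ)).toNat = 0 := by omega
    rw [t1, t2, t3, t4, pow_zero, pow_zero, pow_zero, pow_zero, one_mul, one_mul,
      one_mul, one_mul] at hri
    ext h
    simp only [comp_apply, mul_apply_eq_comp]
    rw [List.ofFn_eq_map, List.ofFn_eq_map, hprod]
    have h2 := congrArg
      (fun A : H →L[ℂ] H => A (((List.finRange d).map fun i => S i ^ m i).prod h)) hri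
    simpa only [comp_apply, mul_apply_eq_comp] using h2
  exact ⟨U, hUiso, hUU, hUW, hdil, fun i h => ⟨hUext i h, hUadj i h⟩⟩
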